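/- Let ℝⁿ be equipped with the Euclidean distance. There exists an integer K ≥ 1 (depending only on n) with the following property: if x₁,…,x_k are points of ℝⁿ and r₁,…,r_k are positive numbers such that x_i ∉ B(x_j,r_j) for all j ≠ i and ⋂_{i=1}^k B(x_i,r_i) ≠ ∅, then k ≤ K. -/

import Mathlib

open Metric Set

private lemma sep_aux {E : Type*} [NormedAddCommGroup E] [InnerProductSpace ℝ E] {u v : E}
    (hu : 0 < ‖u‖) (hv : 0 < ‖v‖) (hab : ‖u‖ ≤ ‖v‖) (h : ‖v‖ ≤ ‖u - v‖) :
    1 ≤ ‖‖u‖⁻¹ • u - ‖v‖⁻¹ • v‖ := by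
  have hsq : ‖u - v‖ ^ 2 = ‖u‖ ^ 2 - 2 * inner ℝ u v + ‖v‖ ^ 2 := by
    rw [norm_sub_sq_real]
  have hp : 2 * (inner ℝ u v : ℝ) ≤ ‖u‖ ^ 2 := by
    nlinarith [h, hsq, hv, norm_nonneg (u - v)]
  set a := ‖u‖
  set b := ‖v‖
  have hnu : ‖a⁻¹ • u‖ = 1 := by
    rw [norm_smul, norm_inv, norm_norm, inv_mul_cancel₀ hu.ne']
  have hnv : ‖b⁻¹ • v‖ = 1 := by
    rw [norm_smul, norm_inv, norm_norm, inv_mul_cancel₀ hv.ne']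
  have hsq2 : ‖a⁻¹ • u - b⁻¹ • v‖ ^ 2 = 2 - 2 * (a⁻¹ * b⁻¹ * inner ℝ u v) := by
    rw [@norm_sub_sq_real E, hnu, hnv, real_inner_smul_left, real_inner_smul_right]
    ring
  have key : 1 ≤ ‖a⁻¹ • u - b⁻¹ • v‖ ^ 2 := by
    rw [hsq2]
    have h1 : a⁻¹ * b⁻¹ * inner ℝ u v ≤ a⁻¹ * b⁻¹ * (a ^ 2 / 2) := by
      apply mul_le_mul_of_nonneg_left _ (by positivity)
      linarith
    have h2 : a⁻¹ * b⁻¹ * (a ^ 2 / 2) = (a / b) / 2 := by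
      field_simp
    have h3 : a / b ≤ 1 := div_le_one_of_le₀ hab hv.le
    linarith
  nlinarith [norm_nonneg (a⁻¹ • u - b⁻¹ • v), key]

/-- Weak Besicovitch covering property for the Euclidean distance on `ℝⁿ`:
there is an integer `K ≥ 1`, depending only on `n`, bounding the cardinality of any
family of closed Euclidean balls such that no ball contains the center of another one
and all balls have a common point. -/
theorem stmt8 (n : ℕ) :
    ∃ K : ℕ, 1 ≤ K ∧
      ∀ (k : ℕ) (x : Fin k → EuclideanSpace ℝ (Fin n)) (r : Fin k → ℝ),
        (∀ i, 0 < r i) →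
        (∀ i j : Fin k, j ≠ i → x i ∉ closedBall (x j) (r j)) →
        (⋂ i, closedBall (x i) (r i)).Nonempty →
        k ≤ K := by
  classical
  refine ⟨5 ^ n + 1, Nat.le_add_left 1 _, ?_⟩
  intro k x r hr hsep ⟨z, hz⟩
  simp only [mem_iInter, mem_closedBall] at hz
  -- distance facts
  have hdist : ∀ i j : Fin k, i ≠ j → r j < dist (x i) (x j) := by
    intro i j hij
    have := hsep i j (Ne.symm hij)
    simpa [mem_closedBall, not_le] using this
  have hxinj : Function.Injective x := by
    intro i j hij
    by_contra h
    have := hdist i j h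
    rw [hij, dist_self] at this
    exact absurd this (not_lt.mpr (hr j).le)
  -- unit vectors
  set u : Fin k → EuclideanSpace ℝ (Fin n) := fun i => ‖x i - z‖⁻¹ • (x i - z) with hu
  set S : Finset (Fin k) := Finset.univ.filter (fun i => x i ≠ z) with hS
  have husep : ∀ i ∈ S, ∀ j ∈ S, i ≠ j → 1 ≤ ‖u i - u j‖ := by
    intro i hi j hj hij
    simp only [hS, Finset.mem_filter] at hi hj
    have hi' : 0 < ‖x i - z‖ := by
      rw [norm_pos_iff, sub_ne_zero]; exact hi.2
    have hj' : 0 < ‖x j - z‖ := by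
      rw [norm_pos_iff, sub_ne_zero]; exact hj.2
    have hbig : ‖x i - z‖ ≤ ‖(x i - z) - (x j - z)‖ ∧ ‖x j - z‖ ≤ ‖(x i - z) - (x j - z)‖ := by
      have e : ‖(x i - z) - (x j - z)‖ = dist (x i) (x j) := by
        rw [dist_eq_norm]; congr 1; abel
      constructor
      · rw [e]
        calc ‖x i - z‖ = dist (x i) z := by rw [dist_eq_norm]
          _ = dist z (x i) := dist_comm _ _
          _ ≤ r i := hz i
          _ ≤ dist (x j) (x i) := (hdist j i (Ne.symm hij)).le
          _ = dist (x i) (x j) := dist_comm _ _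
      · rw [e]
        calc ‖x j - z‖ = dist (x j) z := by rw [dist_eq_norm]
          _ = dist z (x j) := dist_comm _ _
          _ ≤ r j := hz j
          _ ≤ dist (x i) (x j) := (hdist i j hij).le
    rcases le_total ‖x i - z‖ ‖x j - z‖ with hab | hab
    · exact sep_aux hi' hj' hab hbig.2
    · have := sep_aux hj' hi' hab (by
        rw [show (x j - z) - (x i - z) = -((x i - z) - (x j - z)) by abel, norm_neg]
        exact hbig.1)
      rwa [show u i - u j = -(u j - u i) by abel, norm_neg]
  have huinj : Set.InjOn u S := by
    intro i hi j hj hij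
    by_contra h
    have := husep i hi j hj h
    rw [hij, sub_self, norm_zero] at this
    linarith
  -- the image finset
  set s : Finset (EuclideanSpace ℝ (Fin n)) := S.image u with hs
  have hcard : s.card = S.card := Finset.card_image_of_injOn huinj
  have hnorm : ∀ c ∈ s, ‖c‖ ≤ 2 := by
    intro c hc
    simp only [hs, Finset.mem_image] at hc
    obtain ⟨i, hi, rfl⟩ := hc
    simp only [hS, Finset.mem_filter] at hi
    have hi' : ‖x i - z‖ ≠ 0 := by
      rw [norm_ne_zero_iff, sub_ne_zero]; exact hi.2
    rw [hu]
    simp only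
    rw [norm_smul, norm_inv, norm_norm, inv_mul_cancel₀ hi']
    norm_num
  have hsep' : ∀ c ∈ s, ∀ d ∈ s, c ≠ d → 1 ≤ ‖c - d‖ := by
    intro c hc d hd hcd
    simp only [hs, Finset.mem_image] at hc hd
    obtain ⟨i, hi, rfl⟩ := hc
    obtain ⟨j, hj, rfl⟩ := hd
    exact husep i hi j hj (fun h => hcd (by rw [h]))
  have hSle : S.card ≤ 5 ^ n := by
    have := Besicovitch.card_le_of_separated s hnorm hsep'
    rwa [hcard, finrank_euclideanSpace_fin] at this
  -- at most one index outside S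
  have hScle : Sᶜ.card ≤ 1 := by
    rw [Finset.card_le_one]
    intro a ha b hb
    simp only [hS, Finset.mem_compl, Finset.mem_filter, Finset.mem_univ, true_and,
      not_not] at ha hb
    exact hxinj (ha.trans hb.symm)
  have : k = S.card + Sᶜ.card := by
    rw [Finset.card_add_card_compl]
    simp
  omega
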